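/- Let τ₁, τ₂ be positive reals with τ₁ ≠ τ₂, a₀ ∈ ℝ, and set s₀ = -a₀ - 1/τ₁ - 1/τ₂, a₁ = -τ₂·e^{s₀τ₁}/(τ₁(τ₂-τ₁)), a₂ = τ₁·e^{s₀τ₂}/(τ₂(τ₂-τ₁)). Then s₀ is a root of multiplicity at least 3 of Δ(s) = s + a₀ - a₁e^{-sτ₁} - a₂e^{-sτ₂}, i.e., Δ(s₀) = Δ'(s₀) = Δ''(s₀) = 0. -/

import Mathlib

open Complex

theorem stmt_2 (τ₁ τ₂ a₀ : ℝ) (hτ₁ : 0 < τ₁) (hτ₂ : 0 < τ₂) (hne : τ₁ ≠ τ₂)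
    (s₀ : ℝ) (hs₀ : s₀ = -a₀ - 1 / τ₁ - 1 / τ₂)
    (a₁ : ℝ) (ha₁ : a₁ = -(τ₂ * Real.exp (s₀ * τ₁)) / (τ₁ * (τ₂ - τ₁)))
    (a₂ : ℝ) (ha₂ : a₂ = (τ₁ * Real.exp (s₀ * τ₂)) / (τ₂ * (τ₂ - τ₁)))
    (Δ : ℂ → ℂ)
    (hΔ : ∀ s, Δ s = s + (a₀ : ℂ) - (a₁ : ℂ) * Complex.exp (-s * (τ₁ : ℂ))
      - (a₂ : ℂ) * Complex.exp (-s * (τ₂ : ℂ))) :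
    Δ (s₀ : ℂ) = 0 ∧ deriv Δ (s₀ : ℂ) = 0 ∧ iteratedDeriv 2 Δ (s₀ : ℂ) = 0 := by
  have hfun : Δ = fun s => s + (a₀ : ℂ) - (a₁ : ℂ) * Complex.exp (-s * (τ₁ : ℂ))
      - (a₂ : ℂ) * Complex.exp (-s * (τ₂ : ℂ)) := funext hΔ
  have hexp : ∀ (c : ℂ) (s : ℂ), HasDerivAt (fun s : ℂ => Complex.exp (-s * c))
      (-c * Complex.exp (-s * c)) s := by
    intro c s
    have h1 : HasDerivAt (fun s : ℂ => -s * c) (-c) s := by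
      simpa using ((hasDerivAt_id s).neg.mul_const c)
    simpa [mul_comm] using h1.cexp
  have hD : ∀ s : ℂ, HasDerivAt Δ
      (1 + (a₁ : ℂ) * (τ₁ : ℂ) * Complex.exp (-s * (τ₁ : ℂ))
        + (a₂ : ℂ) * (τ₂ : ℂ) * Complex.exp (-s * (τ₂ : ℂ))) s := by
    intro s
    rw [hfun]
    have := (((hasDerivAt_id s).add_const (a₀ : ℂ)).sub
      ((hexp τ₁ s).const_mul (a₁ : ℂ))).sub ((hexp τ₂ s).const_mul (a₂ : ℂ))
    exact this.congr_deriv (by ring)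
  have hderiv : deriv Δ = fun s : ℂ =>
      1 + (a₁ : ℂ) * (τ₁ : ℂ) * Complex.exp (-s * (τ₁ : ℂ))
        + (a₂ : ℂ) * (τ₂ : ℂ) * Complex.exp (-s * (τ₂ : ℂ)) :=
    funext fun s => (hD s).deriv
  have hD2 : ∀ s : ℂ, HasDerivAt (deriv Δ)
      (-(a₁ : ℂ) * (τ₁ : ℂ)^2 * Complex.exp (-s * (τ₁ : ℂ))
        - (a₂ : ℂ) * (τ₂ : ℂ)^2 * Complex.exp (-s * (τ₂ : ℂ))) s := by
    intro s
    rw [hderiv]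
    have := (((hexp τ₁ s).const_mul ((a₁ : ℂ) * (τ₁ : ℂ))).const_add 1).add
      ((hexp τ₂ s).const_mul ((a₂ : ℂ) * (τ₂ : ℂ)))
    exact this.congr_deriv (by ring)
  -- nonzero facts
  have h1 : (τ₁ : ℂ) ≠ 0 := Complex.ofReal_ne_zero.mpr hτ₁.ne'
  have h2 : (τ₂ : ℂ) ≠ 0 := Complex.ofReal_ne_zero.mpr hτ₂.ne'
  have h3 : (τ₂ : ℂ) - (τ₁ : ℂ) ≠ 0 := by
    rw [sub_ne_zero]
    exact fun h => hne (Complex.ofReal_injective h).symm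
  have hE1 : Complex.exp (-(s₀ : ℂ) * (τ₁ : ℂ)) = (Complex.exp ((s₀ : ℂ) * (τ₁ : ℂ)))⁻¹ := by
    rw [← Complex.exp_neg]; ring_nf
  have hE2 : Complex.exp (-(s₀ : ℂ) * (τ₂ : ℂ)) = (Complex.exp ((s₀ : ℂ) * (τ₂ : ℂ)))⁻¹ := by
    rw [← Complex.exp_neg]; ring_nf
  have ha₁' : (a₁ : ℂ) = -((τ₂ : ℂ) * Complex.exp ((s₀ : ℂ) * (τ₁ : ℂ))) /
      ((τ₁ : ℂ) * ((τ₂ : ℂ) - (τ₁ : ℂ))) := by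
    rw [ha₁]; push_cast; ring
  have ha₂' : (a₂ : ℂ) = ((τ₁ : ℂ) * Complex.exp ((s₀ : ℂ) * (τ₂ : ℂ))) /
      ((τ₂ : ℂ) * ((τ₂ : ℂ) - (τ₁ : ℂ))) := by
    rw [ha₂]; push_cast; ring
  have hs₀' : (s₀ : ℂ) = -(a₀ : ℂ) - 1 / (τ₁ : ℂ) - 1 / (τ₂ : ℂ) := by
    rw [hs₀]; push_cast; ring
  have hz1 : Complex.exp ((s₀ : ℂ) * (τ₁ : ℂ)) ≠ 0 := Complex.exp_ne_zero _
  have hz2 : Complex.exp ((s₀ : ℂ) * (τ₂ : ℂ)) ≠ 0 := Complex.exp_ne_zero _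
  have k1 : (a₁ : ℂ) * Complex.exp (-(s₀ : ℂ) * (τ₁ : ℂ))
      = -(τ₂ : ℂ) / ((τ₁ : ℂ) * ((τ₂ : ℂ) - (τ₁ : ℂ))) := by
    rw [ha₁', hE1]
    field_simp
  have k2 : (a₂ : ℂ) * Complex.exp (-(s₀ : ℂ) * (τ₂ : ℂ))
      = (τ₁ : ℂ) / ((τ₂ : ℂ) * ((τ₂ : ℂ) - (τ₁ : ℂ))) := by
    rw [ha₂', hE2]
    field_simp
  refine ⟨?_, ?_, ?_⟩
  · rw [hΔ]
    rw [show ((s₀:ℂ) + (a₀:ℂ) - (a₁:ℂ) * Complex.exp (-(s₀:ℂ) * (τ₁:ℂ))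
        - (a₂:ℂ) * Complex.exp (-(s₀:ℂ) * (τ₂:ℂ)))
      = ((s₀:ℂ) + (a₀:ℂ) - ((a₁:ℂ) * Complex.exp (-(s₀:ℂ) * (τ₁:ℂ)))
        - ((a₂:ℂ) * Complex.exp (-(s₀:ℂ) * (τ₂:ℂ)))) from rfl, k1, k2, hs₀']
    field_simp
    ring
  · rw [hderiv]
    show 1 + (a₁:ℂ) * (τ₁:ℂ) * Complex.exp (-(s₀:ℂ) * (τ₁:ℂ))
        + (a₂:ℂ) * (τ₂:ℂ) * Complex.exp (-(s₀:ℂ) * (τ₂:ℂ)) = 0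
    rw [mul_right_comm (a₁:ℂ), mul_right_comm (a₂:ℂ), k1, k2]
    field_simp
    ring
  · rw [iteratedDeriv_succ, iteratedDeriv_one, (hD2 _).deriv]
    rw [show (-(a₁:ℂ) * (τ₁:ℂ)^2 * Complex.exp (-(s₀:ℂ) * (τ₁:ℂ))
        - (a₂:ℂ) * (τ₂:ℂ)^2 * Complex.exp (-(s₀:ℂ) * (τ₂:ℂ)))
      = (-((a₁:ℂ) * Complex.exp (-(s₀:ℂ) * (τ₁:ℂ))) * (τ₁:ℂ)^2
        - ((a₂:ℂ) * Complex.exp (-(s₀:ℂ) * (τ₂:ℂ))) * (τ₂:ℂ)^2) by ring, k1, k2]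
    field_simp
    ring
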